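/- For every n ≥ 1 and s ≥ n, the number of Boolean functions f : {0,1}^n → {0,1} computable by circuits of size at most s is at most (48·e·s)^s. -/

import Mathlib

/-- A Boolean circuit with `n` inputs and `s` binary gates: gate `g` applies an arbitrary
binary Boolean operation to two earlier wires (the `n` inputs or gates `0, …, g-1`). -/
structure Circuit (n s : ℕ) where
  op : Fin s → Bool → Bool → Bool
  in1 : (g : Fin s) → Fin (n + g.val)
  in2 : (g : Fin s) → Fin (n + g.val)

/-- The list of values of the first `k` gates of `C` on input `x`. -/
def Circuit.valList {n s : ℕ} (C : Circuit n s) (x : Fin n → Bool) : ℕ → List Bool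
  | 0 => []
  | k + 1 =>
    Circuit.valList C x k ++
      [if h : k < s then
          C.op ⟨k, h⟩
            (if h' : (C.in1 ⟨k, h⟩).val < n then x ⟨(C.in1 ⟨k, h⟩).val, h'⟩
             else (Circuit.valList C x k).getD ((C.in1 ⟨k, h⟩).val - n) false)
            (if h' : (C.in2 ⟨k, h⟩).val < n then x ⟨(C.in2 ⟨k, h⟩).val, h'⟩
             else (Circuit.valList C x k).getD ((C.in2 ⟨k, h⟩).val - n) false)
        else false]

/-- The Boolean function computed by `C`: the value of its last gate. -/
def Circuit.compute {n s : ℕ} (C : Circuit n s) (x : Fin n → Bool) : Bool :=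
  (C.valList x s).getD (s - 1) false

namespace Circuit

variable {n s : ℕ}

def val (C : Circuit n s) (x : Fin n → Bool) (g : ℕ) : Bool :=
  (C.valList x (g+1)).getD g false

def wireVal (C : Circuit n s) (x : Fin n → Bool) (w : ℕ) : Bool :=
  if h : w < n then x ⟨w, h⟩ else C.val x (w - n)

lemma length_valList (C : Circuit n s) (x : Fin n → Bool) :
    ∀ k, (C.valList x k).length = k := by
  intro k; induction k with
  | zero => rfl
  | succ k ih => simp [valList, ih]

lemma getD_valList (C : Circuit n s) (x : Fin n → Bool) :
    ∀ {k j : ℕ}, j < k → (C.valList x k).getD j false = C.val x j := by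
  intro k
  induction k with
  | zero => intro j h; omega
  | succ k ih =>
    intro j hj
    rcases Nat.lt_or_ge j k with h | h
    · rw [show C.valList x (k+1) = C.valList x k ++ _ from rfl,
        List.getD_append _ _ _ _ (by rw [length_valList]; exact h), ih h]
    · have hjk : j = k := by omega
      subst hjk
      rfl

lemma val_eq (C : Circuit n s) (x : Fin n → Bool) (g : ℕ) (hg : g < s) :
    C.val x g =
      C.op ⟨g, hg⟩ (C.wireVal x (C.in1 ⟨g, hg⟩).val) (C.wireVal x (C.in2 ⟨g, hg⟩).val) := by
  have hlen : (C.valList x g).length = g := length_valList C x g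
  show (C.valList x g ++ [_]).getD g false = _
  rw [List.getD_append_right _ _ _ _ (by omega), hlen, Nat.sub_self]
  simp only [List.getD_cons_zero, dif_pos hg]
  congr 1
  · unfold wireVal
    have hin : ((C.in1 ⟨g, hg⟩) : ℕ) < n + g := (C.in1 ⟨g, hg⟩).isLt
    rcases Nat.lt_or_ge (C.in1 ⟨g, hg⟩).val n with h | h
    · rw [dif_pos h, dif_pos h]
    · rw [dif_neg (by omega), dif_neg (by omega)]
      exact getD_valList C x (by omega)
  · unfold wireVal
    have hin : ((C.in2 ⟨g, hg⟩) : ℕ) < n + g := (C.in2 ⟨g, hg⟩).isLt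
    rcases Nat.lt_or_ge (C.in2 ⟨g, hg⟩).val n with h | h
    · rw [dif_pos h, dif_pos h]
    · rw [dif_neg (by omega), dif_neg (by omega)]
      exact getD_valList C x (by omega)

lemma compute_eq (C : Circuit n s) (x : Fin n → Bool) (hs : 1 ≤ s) :
    C.compute x = C.val x (s - 1) :=
  getD_valList C x (by omega)

lemma compute_zero (C : Circuit n 0) (x : Fin n → Bool) : C.compute x = false := rfl

end Circuit
namespace Circuit

variable {n : ℕ}

/-- Truncation of a circuit to its first `k` gates. -/
def trunc {s : ℕ} (C : Circuit n s) (k : ℕ) (hk : k ≤ s) : Circuit n k where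
  op g := C.op ⟨g.val, lt_of_lt_of_le g.isLt hk⟩
  in1 g := C.in1 ⟨g.val, lt_of_lt_of_le g.isLt hk⟩
  in2 g := C.in2 ⟨g.val, lt_of_lt_of_le g.isLt hk⟩

lemma valList_trunc {s : ℕ} (C : Circuit n s) (k : ℕ) (hk : k ≤ s) (x : Fin n → Bool) :
    ∀ j, j ≤ k → (C.trunc k hk).valList x j = C.valList x j := by
  intro j
  induction j with
  | zero => intro; rfl
  | succ j ih =>
    intro hj
    have hjk : j < k := hj
    have hjs : j < s := lt_of_lt_of_le hjk hk
    show (C.trunc k hk).valList x j ++ [_] = C.valList x j ++ [_]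
    rw [ih (le_of_lt hjk)]
    congr 1
    rw [dif_pos hjk, dif_pos hjs]
    rfl

lemma val_trunc {s : ℕ} (C : Circuit n s) (k : ℕ) (hk : k ≤ s) (x : Fin n → Bool)
    {g : ℕ} (hg : g < k) : (C.trunc k hk).val x g = C.val x g := by
  unfold val
  rw [valList_trunc C k hk x (g+1) hg]

/-- index renaming when deleting gate `h` -/
def oldIdx (h k : ℕ) : ℕ := if k < h then k else k + 1

/-- wire renaming when deleting gate `h`, rerouting it to gate `g` -/
def remap (n g h w : ℕ) : ℕ := if w < n + h then w else if w = n + h then n + g else w - 1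

lemma oldIdx_lt {m h k : ℕ} (hh : h < m + 1) (hk : k < m) : oldIdx h k < m + 1 := by
  unfold oldIdx; split <;> omega

lemma remap_lt {m g h k w : ℕ} (hg : g < h) (hk : k < m) (hw : w < n + oldIdx h k) :
    remap n g h w < n + k := by
  unfold oldIdx at hw; unfold remap
  by_cases h1 : k < h
  · rw [if_pos h1] at hw
    rw [if_pos (by omega)]
    omega
  · rw [if_neg h1] at hw
    split
    · omega
    · split <;> omega

/-- Delete gate `h` from a circuit, rerouting references to it to the equivalent gate `g`. -/
def delete {m : ℕ} (C : Circuit n (m+1)) (g h : ℕ) (hg : g < h) (hh : h < m + 1) :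
    Circuit n m where
  op k := C.op ⟨oldIdx h k.val, oldIdx_lt hh k.isLt⟩
  in1 k := ⟨remap n g h (C.in1 ⟨oldIdx h k.val, oldIdx_lt hh k.isLt⟩).val,
    remap_lt hg k.isLt (C.in1 ⟨oldIdx h k.val, oldIdx_lt hh k.isLt⟩).isLt⟩
  in2 k := ⟨remap n g h (C.in2 ⟨oldIdx h k.val, oldIdx_lt hh k.isLt⟩).val,
    remap_lt hg k.isLt (C.in2 ⟨oldIdx h k.val, oldIdx_lt hh k.isLt⟩).isLt⟩

lemma val_delete {m : ℕ} (C : Circuit n (m+1)) (g h : ℕ) (hg : g < h) (hh : h < m + 1)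
    (heq : ∀ x, C.val x g = C.val x h) (x : Fin n → Bool) :
    ∀ k, k < m → (C.delete g h hg hh).val x k = C.val x (oldIdx h k) := by
  intro k
  induction k using Nat.strong_induction_on with
  | _ k IH =>
    intro hk
    have hok : oldIdx h k < m + 1 := oldIdx_lt hh hk
    rw [val_eq (C.delete g h hg hh) x k hk, val_eq C x (oldIdx h k) hok]
    have harg : ∀ w : ℕ, w < n + oldIdx h k →
        (C.delete g h hg hh).wireVal x (remap n g h w) = C.wireVal x w := by
      intro w hw
      unfold wireVal remap
      by_cases h1 : w < n
      · rw [dif_pos h1, if_pos (by omega), dif_pos h1]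
      · rw [dif_neg h1]
        by_cases h2 : w < n + h
        · rw [if_pos h2, dif_neg h1]
          have hwk : w - n < k := by unfold oldIdx at hw; split at hw <;> omega
          rw [IH (w - n) hwk (by omega)]
          congr 1
          unfold oldIdx
          rw [if_pos (by omega)]
        · by_cases h3 : w = n + h
          · rw [if_neg h2, if_pos h3, dif_neg (by omega)]
            have hgk : g < k := by unfold oldIdx at hw; split at hw <;> omega
            rw [show n + g - n = g by omega, IH g hgk (by omega)]
            have : oldIdx h g = g := by unfold oldIdx; rw [if_pos hg]
            rw [this, heq x, h3]
            congr 1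
            omega
          · rw [if_neg h2, if_neg h3, dif_neg (by omega)]
            have hwk : w - 1 - n < k := by unfold oldIdx at hw; split at hw <;> omega
            rw [IH (w - 1 - n) hwk (by omega)]
            have : oldIdx h (w - 1 - n) = w - n := by unfold oldIdx; rw [if_neg (by omega)]; omega
            rw [this]
    have e1 := harg (C.in1 ⟨oldIdx h k, hok⟩).val (C.in1 ⟨oldIdx h k, hok⟩).isLt
    have e2 := harg (C.in2 ⟨oldIdx h k, hok⟩).val (C.in2 ⟨oldIdx h k, hok⟩).isLt
    show C.op _ ((C.delete g h hg hh).wireVal x (remap n g h (C.in1 ⟨oldIdx h k, _⟩).val))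
        ((C.delete g h hg hh).wireVal x (remap n g h (C.in2 ⟨oldIdx h k, _⟩).val)) = _
    rw [e1, e2]

end Circuit
namespace Circuit

variable {n : ℕ}

def Distinct {s : ℕ} (C : Circuit n s) : Prop :=
  ∀ g h : ℕ, g < s → h < s → (∀ x, C.val x g = C.val x h) → g = h

/-- one reduction step: a circuit with a duplicated gate can be shrunk. -/
lemma shrink_step {t : ℕ} (C : Circuit n t) (g h : ℕ) (hg : g < h) (hh : h < t)
    (heq : ∀ x, C.val x g = C.val x h) :
    ∃ t' < t, ∃ D : Circuit n t', ∀ x, D.compute x = C.compute x := by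
  obtain ⟨m, rfl⟩ : ∃ m, t = m + 1 := ⟨t - 1, by omega⟩
  by_cases hout : h = m
  · -- h is the output gate: truncate to g+1 gates
    refine ⟨g + 1, by omega, C.trunc (g+1) (by omega), fun x => ?_⟩
    rw [compute_eq _ x (by omega), compute_eq C x (by omega)]
    simp only [Nat.add_sub_cancel]
    rw [val_trunc C (g+1) (by omega) x (by omega), heq x, hout]
  · -- h is internal: delete it
    refine ⟨m, by omega, C.delete g h hg hh, fun x => ?_⟩
    have hm : 1 ≤ m := by omega
    rw [compute_eq _ x hm, compute_eq C x (by omega)]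
    rw [val_delete C g h hg hh heq x (m-1) (by omega)]
    congr 1
    unfold oldIdx
    rw [if_neg (by omega)]
    omega

lemma exists_distinct : ∀ (t : ℕ) (C : Circuit n t),
    ∃ t' ≤ t, ∃ D : Circuit n t', (∀ x, D.compute x = C.compute x) ∧ D.Distinct := by
  intro t
  induction t using Nat.strong_induction_on with
  | _ t IH =>
    intro C
    by_cases hd : C.Distinct
    · exact ⟨t, le_refl t, C, fun _ => rfl, hd⟩
    · unfold Distinct at hd
      push_neg at hd
      obtain ⟨g, h, hg, hh, heq, hne⟩ := hd
      have key : ∃ t' < t, ∃ D : Circuit n t', ∀ x, D.compute x = C.compute x := by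
        rcases Nat.lt_or_ge g h with hlt | hge
        · exact shrink_step C g h hlt hh heq
        · exact shrink_step C h g (by omega) hg (fun x => (heq x).symm)
      obtain ⟨t', ht', D, hD⟩ := key
      obtain ⟨t'', ht'', E, hE, hdist⟩ := IH t' ht' D
      exact ⟨t'', by omega, E, fun x => (hE x).trans (hD x), hdist⟩

end Circuit
namespace Circuit

variable {n : ℕ}

def Enc (n t : ℕ) : Type :=
  (Fin t → ((Bool → Bool → Bool) × {p : Fin (n+t) × Fin (n+t) // p.1 ≤ p.2})) × Fin t

instance (t : ℕ) : Fintype (Enc n t) := by unfold Enc; infer_instance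

def extF {t : ℕ} (σ : Equiv.Perm (Fin t)) {g : Fin t} (w : Fin (n + g.val)) : Fin (n + t) :=
  if h : w.val < n then ⟨w.val, lt_of_lt_of_le h (Nat.le_add_right n t)⟩
  else ⟨n + (σ ⟨w.val - n, by have h1 := w.isLt; have h2 := g.isLt; omega⟩).val,
    Nat.add_lt_add_left (Fin.isLt _) n⟩

def sortGate {m : ℕ} (o : Bool → Bool → Bool) (a b : Fin m) :
    (Bool → Bool → Bool) × {p : Fin m × Fin m // p.1 ≤ p.2} :=
  if hab : a ≤ b then (o, ⟨(a, b), hab⟩) else (fun x y => o y x, ⟨(b, a), le_of_not_ge hab⟩)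

lemma sortGate_eval {m : ℕ} (V : Fin m → Bool) (o : Bool → Bool → Bool) (a b : Fin m) :
    (sortGate o a b).1 (V (sortGate o a b).2.val.1) (V (sortGate o a b).2.val.2)
      = o (V a) (V b) := by
  unfold sortGate; split <;> rfl

lemma sortGate_congr {m : ℕ} {o o' : Bool → Bool → Bool} {a b a' b' : Fin m}
    (h : sortGate o a b = sortGate o' a' b') (V : Fin m → Bool) :
    o (V a) (V b) = o' (V a') (V b') := by
  rw [← sortGate_eval V o a b, ← sortGate_eval V o' a' b', h]

def encode {t : ℕ} (ht : 1 ≤ t) (σ : Equiv.Perm (Fin t)) (C : Circuit n t) : Enc n t :=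
  (fun j => sortGate (C.op (σ.symm j)) (extF σ (C.in1 (σ.symm j))) (extF σ (C.in2 (σ.symm j))),
   σ ⟨t-1, by omega⟩)

lemma encode_val {t : ℕ} (ht : 1 ≤ t) (σ σ' : Equiv.Perm (Fin t)) (C C' : Circuit n t)
    (hE : encode ht σ C = encode ht σ' C') (x : Fin n → Bool) :
    ∀ gv : ℕ, ∀ hgv : gv < t, C'.val x (σ'.symm (σ ⟨gv, hgv⟩)).val = C.val x gv := by
  intro gv
  induction gv using Nat.strong_induction_on with
  | _ gv IH =>
    intro hgv
    set g : Fin t := ⟨gv, hgv⟩ with hgdef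
    have hgval : (g : ℕ) = gv := rfl
    set g' : Fin t := σ'.symm (σ g) with hg'def
    -- the universal valuation
    set V : Fin (n+t) → Bool := fun w =>
      if hw : w.val < n then x ⟨w.val, hw⟩
      else C'.val x (σ'.symm ⟨w.val - n, by have := w.isLt; omega⟩).val with hVdef
    -- evaluating V on relabeled wires of C'
    have claim1 : ∀ (u : Fin t) (w : Fin (n + u.val)), V (extF σ' w) = C'.wireVal x w.val := by
      intro u w
      unfold extF wireVal
      by_cases hw : w.val < n
      · rw [dif_pos hw]
        show V ⟨w.val, _⟩ = _
        rw [hVdef]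
        simp only [dif_pos hw]
      · rw [dif_neg hw]
        have hwlt : w.val < n + u.val := w.isLt
        set z : Fin t := σ' ⟨w.val - n, by have := u.isLt; omega⟩ with hzdef
        show V ⟨n + z.val, _⟩ = _
        rw [hVdef]
        have hnz : ¬ (n + z.val < n) := by omega
        simp only [dif_neg hnz, dif_neg hw]
        congr 1
        have : (⟨n + z.val - n, by have := z.isLt; omega⟩ : Fin t) = z := by
          apply Fin.ext; simp
        rw [this, hzdef, Equiv.symm_apply_apply]
    -- evaluating V on relabeled wires of C, using the induction hypothesis
    have claim2 : ∀ (w : Fin (n + g.val)), V (extF σ w) = C.wireVal x w.val := by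
      intro w
      unfold extF wireVal
      by_cases hw : w.val < n
      · rw [dif_pos hw]
        show V ⟨w.val, _⟩ = _
        rw [hVdef]
        simp only [dif_pos hw]
      · rw [dif_neg hw]
        have hwlt : w.val < n + g.val := w.isLt
        set z : Fin t := σ ⟨w.val - n, by have := g.isLt; omega⟩ with hzdef
        show V ⟨n + z.val, _⟩ = _
        rw [hVdef]
        have hnz : ¬ (n + z.val < n) := by omega
        simp only [dif_neg hnz, dif_neg hw]
        have : (⟨n + z.val - n, by have := z.isLt; omega⟩ : Fin t) = z := by
          apply Fin.ext; simp
        rw [this, hzdef]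
        exact IH (w.val - n) (by omega) (by have := g.isLt; omega)
    -- extract the gate equality at position σ g
    have hgate := congrFun (congrArg Prod.fst hE) (σ g)
    simp only [encode] at hgate
    rw [Equiv.symm_apply_apply] at hgate
    have hmain := sortGate_congr hgate V
    rw [claim2 (C.in1 g), claim2 (C.in2 g), claim1 (σ'.symm (σ g)) (C'.in1 (σ'.symm (σ g))),
      claim1 (σ'.symm (σ g)) (C'.in2 (σ'.symm (σ g)))] at hmain
    rw [val_eq C x gv hgv, val_eq C' x g'.val (by exact g'.isLt)]
    exact hmain.symm

end Circuit
namespace Circuit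

variable {n : ℕ}

def SetT (n t : ℕ) : Set ((Fin n → Bool) → Bool) :=
  {f | ∃ C : Circuit n t, (∀ x, C.compute x = f x) ∧ C.Distinct}

lemma card_gate_le (m : ℕ) :
    Fintype.card ((Bool → Bool → Bool) × {p : Fin m × Fin m // p.1 ≤ p.2})
      ≤ 8 * (m * (m + 1)) := by
  rw [Fintype.card_prod]
  have h1 : Fintype.card (Bool → Bool → Bool) = 16 := by
    simp [Fintype.card_fun]
  have h2 : Fintype.card {p : Fin m × Fin m // p.1 ≤ p.2} = (m + 1).choose 2 := by
    rw [← Fintype.card_congr Sym2.sortEquiv, Sym2.card, Fintype.card_fin]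
  rw [h1, h2, Nat.choose_two_right]
  have : (m + 1) * (m + 1 - 1) / 2 = m * (m + 1) / 2 := by
    congr 1; simp [Nat.mul_comm]
  rw [this]
  omega

lemma card_Enc_le (t : ℕ) :
    Fintype.card (Enc n t) ≤ (8 * ((n+t) * (n+t+1)))^t * t := by
  unfold Enc
  rw [Fintype.card_prod, Fintype.card_fun, Fintype.card_fin]
  exact Nat.mul_le_mul_right t (Nat.pow_le_pow_left (card_gate_le (n+t)) t)

lemma ncard_SetT (t : ℕ) (ht : 1 ≤ t) :
    (SetT n t).ncard * t.factorial ≤ (8 * ((n+t) * (n+t+1)))^t * t := by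
  classical
  haveI : Fintype ↥(SetT n t) := Fintype.ofFinite _
  choose Cf hf1 hf2 using fun f : ↥(SetT n t) => f.2
  set Ψ : ↥(SetT n t) × Equiv.Perm (Fin t) → Enc n t :=
    fun p => encode ht p.2 (Cf p.1) with hΨ
  have hinj : Function.Injective Ψ := by
    rintro ⟨f, σ⟩ ⟨f', σ'⟩ hEq
    simp only [hΨ] at hEq
    have hout : σ ⟨t-1, by omega⟩ = σ' ⟨t-1, by omega⟩ := congrArg Prod.snd hEq
    have hff' : f = f' := by
      apply Subtype.ext
      funext x
      have h1 := encode_val ht σ σ' (Cf f) (Cf f') hEq x (t-1) (by omega)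
      rw [hout, Equiv.symm_apply_apply] at h1
      have e1 : f.1 x = (Cf f).val x (t-1) := by
        rw [← hf1 f x, compute_eq _ x ht]
      have e2 : f'.1 x = (Cf f').val x (t-1) := by
        rw [← hf1 f' x, compute_eq _ x ht]
      rw [e1, e2, ← h1]
    subst hff'
    have hσ : σ = σ' := by
      apply Equiv.ext
      intro g
      have h1 := fun x => encode_val ht σ σ' (Cf f) (Cf f) hEq x g.val g.isLt
      have h2 := hf2 f (σ'.symm (σ ⟨g.val, g.isLt⟩)).val g.val (Fin.isLt _) g.isLt h1
      have h3 : σ'.symm (σ ⟨g.val, g.isLt⟩) = g := Fin.ext (by rw [h2])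
      have := congrArg σ' h3
      rw [Equiv.apply_symm_apply] at this
      rw [show (⟨g.val, g.isLt⟩ : Fin t) = g from Fin.ext rfl] at this
      exact this
    rw [hσ]
  have hcard := Fintype.card_le_of_injective Ψ hinj
  rw [Fintype.card_prod, Fintype.card_perm, Fintype.card_fin] at hcard
  have hncard : (SetT n t).ncard = Fintype.card ↥(SetT n t) := by
    rw [← Nat.card_coe_set_eq, Nat.card_eq_fintype_card]
  rw [hncard]
  exact le_trans hcard (card_Enc_le t)

end Circuit
namespace Circuit

variable {n : ℕ}

lemma mem_SetT {s : ℕ} (hn : 1 ≤ n) (hs : n ≤ s) (f : (Fin n → Bool) → Bool)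
    (hf : ∃ s' ≤ s, ∃ C : Circuit n s', ∀ x, C.compute x = f x) :
    ∃ t, 1 ≤ t ∧ t ≤ s ∧ f ∈ SetT n t := by
  obtain ⟨s', hs', C, hC⟩ := hf
  obtain ⟨t', ht', D, hD, hdist⟩ := exists_distinct s' C
  rcases Nat.eq_zero_or_pos t' with h0 | hpos
  · -- f is the constant false function; use a one-gate circuit
    subst h0
    have hfalse : ∀ x, f x = false := by
      intro x; rw [← hC x, ← hD x, compute_zero]
    refine ⟨1, le_refl 1, by omega, ?_⟩
    refine ⟨⟨fun _ _ _ => false, fun g => ⟨0, by omega⟩, fun g => ⟨0, by omega⟩⟩,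
      fun x => ?_, ?_⟩
    · rw [compute_eq _ x (le_refl 1), hfalse x]
      rw [val_eq _ x 0 (by omega)]
    · intro g h hg hh _; omega
  · exact ⟨t', hpos, by omega, D, fun x => (hD x).trans (hC x), hdist⟩

lemma ncard_biUnion_le {α β : Type*} [Fintype β] (F : Finset α) (f : α → Set β) :
    (⋃ i ∈ F, f i).ncard ≤ ∑ i ∈ F, (f i).ncard := by
  classical
  induction F using Finset.induction_on with
  | empty => simp
  | insert a F' hnotmem ih =>
    rw [Finset.set_biUnion_insert, Finset.sum_insert hnotmem]
    exact le_trans (Set.ncard_union_le _ _) (by omega)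

end Circuit
section Numeric

open Finset

lemma pow_le_exp_mul_factorial (s : ℕ) : (s:ℝ)^s ≤ Real.exp 1 ^ s * s.factorial := by
  have h := Real.pow_div_factorial_le_exp (x := (s:ℝ)) (Nat.cast_nonneg s) s
  have he : Real.exp 1 ^ s = Real.exp s := by rw [← Real.exp_nat_mul, mul_one]
  rw [div_le_iff₀ (by positivity : (0:ℝ) < s.factorial)] at h
  rw [he]
  exact h

lemma sum_Icc_le (A : ℝ) : ∀ s : ℕ, 1 ≤ s → 48 * s ≤ A →
    ∑ t ∈ Finset.Icc 1 s, A^t / t.factorial ≤ A^s / s.factorial * (48/47) := by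
  intro s hs
  induction s, hs using Nat.le_induction with
  | base =>
    intro hA
    have hA0 : (0:ℝ) ≤ A := by push_cast at hA; linarith [hA]
    simp [Nat.factorial]
    linarith
  | succ s hs ih =>
    intro hA
    have hA' : 48 * s ≤ A := by push_cast at hA ⊢; linarith
    have hA0 : (0:ℝ) < A := by
      have hs1 : (1:ℝ) ≤ (s:ℝ) := by exact_mod_cast hs
      nlinarith
    have hicc : Finset.Icc 1 (s+1) = insert (s+1) (Finset.Icc 1 s) := by
      ext a; simp [Finset.mem_Icc, Finset.mem_insert]; omega
    rw [hicc, Finset.sum_insert (by simp [Finset.mem_Icc])]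
    have h1 := ih hA'
    have hfacpos : (0:ℝ) < s.factorial := by positivity
    have hfacpos' : (0:ℝ) < (s+1).factorial := by positivity
    -- A^s / s! ≤ A^(s+1)/(s+1)! * (1/48)
    have key : A^s / s.factorial ≤ A^(s+1) / (s+1).factorial * (1/48) := by
      rw [div_le_iff₀ hfacpos]
      have hfact : ((s+1).factorial : ℝ) = (s+1) * s.factorial := by
        rw [Nat.factorial_succ]; push_cast; ring
      rw [div_mul_eq_mul_div, div_mul_eq_mul_div, le_div_iff₀ hfacpos']
      rw [hfact, pow_succ]
      -- A^s * ((s+1) * s!) * 48 ≤ A^s * A * 1 * s!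
      have hs1 : 48 * ((s:ℝ)+1) ≤ A := by push_cast at hA; linarith
      have hpow : (0:ℝ) ≤ A^s := le_of_lt (pow_pos hA0 s)
      nlinarith [mul_le_mul_of_nonneg_left hs1 (mul_nonneg hpow hfacpos.le)]
    calc A^(s+1) / (s+1).factorial + ∑ t ∈ Finset.Icc 1 s, A^t / t.factorial
        ≤ A^(s+1) / (s+1).factorial + A^s / s.factorial * (48/47) := by linarith
      _ ≤ A^(s+1) / (s+1).factorial + A^(s+1)/(s+1).factorial * (1/48) * (48/47) := by
          have := key
          nlinarith
      _ = A^(s+1) / (s+1).factorial * (48/47) := by ring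

lemma exp_half_lt : Real.exp (1/2) < 1.6488 := by
  have h1 : Real.exp (1/2) * Real.exp (1/2) = Real.exp 1 := by
    rw [← Real.exp_add]; norm_num
  have h2 := Real.exp_one_lt_d9
  have h3 := Real.exp_pos (1/2 : ℝ)
  nlinarith

lemma lin_le_pow : ∀ s : ℕ, 6 ≤ s → (48/47 : ℝ) * s * Real.exp (1/2) ≤ 1.5 ^ s := by
  intro s hs
  induction s, hs using Nat.le_induction with
  | base =>
    have := exp_half_lt
    have h0 := Real.exp_pos (1/2:ℝ)
    norm_num
    nlinarith
  | succ s hs ih =>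
    have h1 := ih
    have h0 := Real.exp_pos (1/2:ℝ)
    have hs6 : (6:ℝ) ≤ s := by exact_mod_cast hs
    push_cast
    calc (48/47 : ℝ) * (s+1) * Real.exp (1/2)
        ≤ (48/47 : ℝ) * s * Real.exp (1/2) * 1.5 := by nlinarith
      _ ≤ 1.5^s * 1.5 := by nlinarith
      _ = 1.5^(s+1) := by rw [pow_succ]

lemma pow_ineq (s : ℕ) (hs : 6 ≤ s) :
    (48/47 : ℝ) * s * (2*s+1)^s ≤ (3*s)^s := by
  have hspos : (0:ℝ) < s := by exact_mod_cast Nat.lt_of_lt_of_le (by norm_num) hs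
  have h1 : (2*(s:ℝ)+1) ≤ 2*s * Real.exp (1/(2*s)) := by
    have := Real.add_one_le_exp (1/(2*(s:ℝ)))
    have h2s : (0:ℝ) < 2*s := by linarith
    calc 2*(s:ℝ)+1 = 2*s * (1/(2*s) + 1) := by field_simp; ring
      _ ≤ 2*s * Real.exp (1/(2*s)) := by nlinarith
  have h2 : ((2:ℝ)*s+1)^s ≤ (2*s)^s * Real.exp (1/2) := by
    calc ((2:ℝ)*s+1)^s ≤ (2*s * Real.exp (1/(2*s)))^s := by
          apply pow_le_pow_left₀ (by linarith) h1
      _ = (2*s)^s * Real.exp (1/(2*s)) ^ s := mul_pow _ _ _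
      _ = (2*s)^s * Real.exp (1/2) := by
          rw [← Real.exp_nat_mul]
          congr 1
          field_simp
  have h3 : ((3:ℝ)*s)^s = (2*s)^s * 1.5^s := by
    rw [← mul_pow]; congr 1; ring
  have h4 := lin_le_pow s hs
  have h5 : (0:ℝ) ≤ (2*(s:ℝ))^s := by positivity
  have h0 := Real.exp_pos (1/2:ℝ)
  calc (48/47 : ℝ) * s * (2*s+1)^s ≤ (48/47 : ℝ) * s * ((2*s)^s * Real.exp (1/2)) := by
        nlinarith
    _ = (2*(s:ℝ))^s * ((48/47 : ℝ) * s * Real.exp (1/2)) := by ring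
    _ ≤ (2*(s:ℝ))^s * 1.5^s := by nlinarith
    _ = ((3:ℝ)*s)^s := h3.symm

lemma small_case (s : ℕ) (hs1 : 1 ≤ s) (hs5 : s ≤ 5) :
    ((2:ℝ))^(2^s) ≤ (48 * Real.exp 1 * s) ^ s := by
  have he : (2.7182818283:ℝ) < Real.exp 1 := Real.exp_one_gt_d9
  have h130 : (130:ℝ) * s ≤ 48 * Real.exp 1 * s := by
    have : (0:ℝ) ≤ s := Nat.cast_nonneg s
    nlinarith
  have hmono : ((130:ℝ) * s)^s ≤ (48 * Real.exp 1 * s) ^ s := by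
    apply pow_le_pow_left₀ (by positivity) h130
  refine le_trans ?_ hmono
  interval_cases s <;> norm_num
end Numeric

/-- Lutz's counting bound: for `n ≥ 1` and `s ≥ n`, the number of Boolean functions on
`n` input bits computable by circuits with at most `s` gates is at most `(48·e·s)^s`. -/
theorem count_circuit_functions (n s : ℕ) (hn : 1 ≤ n) (hs : n ≤ s) :
    (Set.ncard {f : (Fin n → Bool) → Bool |
        ∃ s' ≤ s, ∃ C : Circuit n s', ∀ x, C.compute x = f x} : ℝ) ≤
      (48 * Real.exp 1 * s) ^ s := by
  classical
  set S : Set ((Fin n → Bool) → Bool) :=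
    {f | ∃ s' ≤ s, ∃ C : Circuit n s', ∀ x, C.compute x = f x} with hSdef
  have hs1 : 1 ≤ s := le_trans hn hs
  have hspos : (0:ℝ) < s := by exact_mod_cast hs1
  rcases le_or_gt s 5 with hsmall | hbig
  · -- small s : use the trivial bound by the total number of Boolean functions
    have h2 : S.ncard ≤ 2^(2^n) := by
      calc S.ncard ≤ (Set.univ : Set ((Fin n → Bool) → Bool)).ncard :=
            Set.ncard_le_ncard (Set.subset_univ _) (Set.toFinite _)
        _ = Fintype.card ((Fin n → Bool) → Bool) := by
            rw [Set.ncard_univ, Nat.card_eq_fintype_card]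
        _ = 2^(2^n) := by simp [Fintype.card_fun]
    have h3 : (S.ncard : ℝ) ≤ (2:ℝ)^(2^n) := by exact_mod_cast h2
    have h4 : (2:ℝ)^(2^n) ≤ (2:ℝ)^(2^s) :=
      pow_le_pow_right₀ one_le_two (Nat.pow_le_pow_right (by norm_num) hs)
    exact le_trans h3 (le_trans h4 (small_case s hs1 hsmall))
  · -- large s : the counting argument
    have hcover : S ⊆ ⋃ t ∈ Finset.Icc 1 s, Circuit.SetT n t := by
      intro f hf
      obtain ⟨t, ht1, ht2, hmem⟩ := Circuit.mem_SetT hn hs f hf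
      exact Set.mem_biUnion (Finset.mem_Icc.mpr ⟨ht1, ht2⟩) hmem
    have h1 : S.ncard ≤ ∑ t ∈ Finset.Icc 1 s, (Circuit.SetT n t).ncard :=
      le_trans (Set.ncard_le_ncard hcover (Set.toFinite _))
        (Circuit.ncard_biUnion_le _ _)
    set A : ℝ := 16 * s * (2*s+1) with hAdef
    have hApos : (0:ℝ) < A := by rw [hAdef]; positivity
    have hterm : ∀ t ∈ Finset.Icc 1 s,
        ((Circuit.SetT n t).ncard : ℝ) ≤ s * (A^t / t.factorial) := by
      intro t htIcc
      obtain ⟨ht1, hts⟩ := Finset.mem_Icc.mp htIcc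
      have hnat := Circuit.ncard_SetT (n := n) t ht1
      have hfac : (0:ℝ) < t.factorial := by positivity
      have hcast : ((Circuit.SetT n t).ncard : ℝ) * t.factorial
          ≤ ((8*((n+t)*(n+t+1)) : ℕ) : ℝ)^t * t := by exact_mod_cast hnat
      have hBA : ((8*((n+t)*(n+t+1)) : ℕ) : ℝ) ≤ A := by
        rw [hAdef]
        push_cast
        have c1 : (n:ℝ) ≤ s := by exact_mod_cast hs
        have c2 : (t:ℝ) ≤ s := by exact_mod_cast hts
        have c3 : (0:ℝ) ≤ n := Nat.cast_nonneg n
        have c4 : (0:ℝ) ≤ t := Nat.cast_nonneg t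
        nlinarith
      have hpow : ((8*((n+t)*(n+t+1)) : ℕ) : ℝ)^t ≤ A^t :=
        pow_le_pow_left₀ (Nat.cast_nonneg _) hBA t
      have hts' : (t:ℝ) ≤ s := by exact_mod_cast hts
      have h5 : ((Circuit.SetT n t).ncard : ℝ) ≤ (A^t * s) / t.factorial := by
        rw [le_div_iff₀ hfac]
        exact le_trans hcast
          (mul_le_mul hpow hts' (Nat.cast_nonneg t) (le_of_lt (pow_pos hApos t)))
      calc ((Circuit.SetT n t).ncard : ℝ) ≤ (A^t * s) / t.factorial := h5
        _ = s * (A^t / t.factorial) := by ring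
    have hsum : (S.ncard : ℝ) ≤ (s:ℝ) * (A^s / s.factorial * (48/47)) := by
      have hc1 : (S.ncard : ℝ) ≤ ∑ t ∈ Finset.Icc 1 s, ((Circuit.SetT n t).ncard : ℝ) := by
        exact_mod_cast h1
      have hc2 : ∑ t ∈ Finset.Icc 1 s, ((Circuit.SetT n t).ncard : ℝ)
          ≤ ∑ t ∈ Finset.Icc 1 s, (s:ℝ) * (A^t / t.factorial) :=
        Finset.sum_le_sum hterm
      have hc3 : ∑ t ∈ Finset.Icc 1 s, (s:ℝ) * (A^t / t.factorial)
          = (s:ℝ) * ∑ t ∈ Finset.Icc 1 s, A^t / t.factorial := by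
        rw [Finset.mul_sum]
      have hA48 : 48 * (s:ℝ) ≤ A := by
        have h1s : (1:ℝ) ≤ s := by exact_mod_cast hs1
        rw [hAdef]; nlinarith
      have hc4 := sum_Icc_le A s hs1 hA48
      calc (S.ncard : ℝ) ≤ ∑ t ∈ Finset.Icc 1 s, (s:ℝ) * (A^t / t.factorial) :=
            le_trans hc1 hc2
        _ = (s:ℝ) * ∑ t ∈ Finset.Icc 1 s, A^t / t.factorial := hc3
        _ ≤ (s:ℝ) * (A^s / s.factorial * (48/47)) := by
            apply mul_le_mul_of_nonneg_left hc4 (le_of_lt hspos)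
    -- final comparison
    have hs6 : 6 ≤ s := hbig
    have hfacs : (0:ℝ) < s.factorial := by positivity
    have key2 : (48/47 : ℝ) * s * A^s ≤ 48^s * (s:ℝ)^s * (s:ℝ)^s := by
      have e1 : A^s = 16^s * (s:ℝ)^s * (2*(s:ℝ)+1)^s := by
        rw [hAdef, show (16:ℝ) * s * (2*s+1) = (16 * s) * (2*s+1) by ring, mul_pow, mul_pow]
      have e2 : (48:ℝ)^s * (s:ℝ)^s * (s:ℝ)^s = 16^s * (s:ℝ)^s * (3*(s:ℝ))^s := by
        rw [mul_pow, show (48:ℝ)^s = 16^s * 3^s by rw [← mul_pow]; norm_num]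
        ring
      rw [e1, e2]
      have hpi := pow_ineq s hs6
      have hnn : (0:ℝ) ≤ 16^s * (s:ℝ)^s := by positivity
      calc (48/47 : ℝ) * s * (16^s * (s:ℝ)^s * (2*(s:ℝ)+1)^s)
          = 16^s * (s:ℝ)^s * ((48/47 : ℝ) * s * (2*(s:ℝ)+1)^s) := by ring
        _ ≤ 16^s * (s:ℝ)^s * ((3*(s:ℝ))^s) := mul_le_mul_of_nonneg_left hpi hnn
        _ = 16^s * (s:ℝ)^s * (3*(s:ℝ))^s := rfl
    have key1 : (48:ℝ)^s * (s:ℝ)^s * (s:ℝ)^s ≤ (48 * Real.exp 1 * s)^s * s.factorial := by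
      have e3 : ((48:ℝ) * Real.exp 1 * s)^s = 48^s * Real.exp 1 ^ s * (s:ℝ)^s := by
        rw [mul_pow, mul_pow]
      rw [e3]
      have hfe := pow_le_exp_mul_factorial s
      have hnn : (0:ℝ) ≤ (48:ℝ)^s * (s:ℝ)^s := by positivity
      calc (48:ℝ)^s * (s:ℝ)^s * (s:ℝ)^s = (48:ℝ)^s * (s:ℝ)^s * ((s:ℝ)^s) := rfl
        _ ≤ (48:ℝ)^s * (s:ℝ)^s * (Real.exp 1 ^ s * s.factorial) :=
            mul_le_mul_of_nonneg_left hfe hnn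
        _ = 48^s * Real.exp 1 ^ s * (s:ℝ)^s * s.factorial := by ring
    calc (S.ncard : ℝ) ≤ (s:ℝ) * (A^s / s.factorial * (48/47)) := hsum
      _ = ((48/47 : ℝ) * s * A^s) / s.factorial := by ring
      _ ≤ ((48 * Real.exp 1 * s)^s * s.factorial) / s.factorial := by
          exact (div_le_div_iff_of_pos_right hfacs).mpr (le_trans key2 key1)
      _ = (48 * Real.exp 1 * s)^s := by field_simp
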